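/- Let S be a positive definite symmetric 2×2 real matrix and T a positive semidefinite symmetric 2×2 real matrix, and suppose T₂₂ − m_min·S₂₂ ≠ 0. Then the function β ↦ Q_S(β) = (b(β)ᵀ T b(β))/(b(β)ᵀ S b(β)) attains its infimum over ℝ, the infimum equals m_min, and the unique minimizer is β̂_LIML = (T₁₂ − m_min·S₁₂)/(T₂₂ − m_min·S₂₂); moreover β̂_LIML is also the unique maximizer over ℝ of β ↦ Q_T(β) = (a(β)ᵀ S⁻¹ T S⁻¹ a(β))/(a(β)ᵀ S⁻¹ a(β)), and the maximal value of Q_T equals trace(S⁻¹T) − m_min = m_max. -/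

import Mathlib

open Matrix

/-- `a(β) = (β, 1)ᵀ`. -/
def aVec (β : ℝ) : Fin 2 → ℝ := ![β, 1]

/-- `b(β) = (1, -β)ᵀ`. -/
def bVec (β : ℝ) : Fin 2 → ℝ := ![1, -β]

/-- `Q_S(β) = (b(β)ᵀ T b(β))/(b(β)ᵀ S b(β))`. -/
noncomputable def QS (S T : Matrix (Fin 2) (Fin 2) ℝ) (β : ℝ) : ℝ :=
  (bVec β ⬝ᵥ T.mulVec (bVec β)) / (bVec β ⬝ᵥ S.mulVec (bVec β))

/-- `Q_T(β) = (a(β)ᵀ S⁻¹ T S⁻¹ a(β))/(a(β)ᵀ S⁻¹ a(β))`. -/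
noncomputable def QT (S T : Matrix (Fin 2) (Fin 2) ℝ) (β : ℝ) : ℝ :=
  (aVec β ⬝ᵥ (S⁻¹ * T * S⁻¹).mulVec (aVec β)) / (aVec β ⬝ᵥ S⁻¹.mulVec (aVec β))

lemma spec_iff_det' (A : Matrix (Fin 2) (Fin 2) ℝ) (μ : ℝ) :
    μ ∈ spectrum ℝ A ↔ (μ • (1:Matrix (Fin 2) (Fin 2) ℝ) - A).det = 0 := by
  rw [spectrum.mem_iff, Matrix.isUnit_iff_isUnit_det, isUnit_iff_ne_zero, not_not,
    Algebra.algebraMap_eq_smul_one]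

set_option maxHeartbeats 1000000

theorem stmt_4 (S T : Matrix (Fin 2) (Fin 2) ℝ) (hS : S.PosDef) (hT : T.PosSemidef)
    (mmin mmax : ℝ)
    (hmin : mmin ∈ spectrum ℝ (S⁻¹ * T)) (hmax : mmax ∈ spectrum ℝ (S⁻¹ * T))
    (hbounds : ∀ μ ∈ spectrum ℝ (S⁻¹ * T), mmin ≤ μ ∧ μ ≤ mmax)
    (hdenom : T 1 1 - mmin * S 1 1 ≠ 0) :
    (∀ β : ℝ, mmin ≤ QS S T β) ∧
    QS S T ((T 0 1 - mmin * S 0 1) / (T 1 1 - mmin * S 1 1)) = mmin ∧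
    (∀ β : ℝ, QS S T β = mmin → β = (T 0 1 - mmin * S 0 1) / (T 1 1 - mmin * S 1 1)) ∧
    (∀ β : ℝ, QT S T β ≤ (S⁻¹ * T).trace - mmin) ∧
    QT S T ((T 0 1 - mmin * S 0 1) / (T 1 1 - mmin * S 1 1)) = (S⁻¹ * T).trace - mmin ∧
    (∀ β : ℝ, QT S T β = (S⁻¹ * T).trace - mmin →
      β = (T 0 1 - mmin * S 0 1) / (T 1 1 - mmin * S 1 1)) ∧
    (S⁻¹ * T).trace - mmin = mmax := by
  -- symmetry of entries
  have hS10 : S 1 0 = S 0 1 := by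
    have h2 := congrFun (congrFun hS.1 1) 0
    simpa [Matrix.conjTranspose_apply] using h2.symm
  have hT10 : T 1 0 = T 0 1 := by
    have h2 := congrFun (congrFun hT.1 1) 0
    simpa [Matrix.conjTranspose_apply] using h2.symm
  have hd : S.det ≠ 0 := ne_of_gt hS.det_pos
  have hdu : IsUnit S.det := isUnit_iff_ne_zero.mpr hd
  have hdS : S.det = S 0 0 * S 1 1 - S 0 1 ^ 2 := by
    rw [Matrix.det_fin_two, hS10]; ring
  have hdpos : 0 < S 0 0 * S 1 1 - S 0 1 ^ 2 := hdS ▸ hS.det_pos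
  have hdne : S 0 0 * S 1 1 - S 0 1 ^ 2 ≠ 0 := ne_of_gt hdpos
  -- quadratic forms
  have hSq : ∀ u v : ℝ, u ≠ 0 ∨ v ≠ 0 →
      0 < S 0 0 * u^2 + 2 * S 0 1 * u * v + S 1 1 * v^2 := by
    intro u v huv
    have hne : (![u, v] : Fin 2 → ℝ) ≠ 0 := by
      intro h
      rw [funext_iff] at h
      have h0 := h 0; have h1 := h 1
      simp at h0 h1
      rcases huv with h | h
      · exact h h0
      · exact h h1
    have := hS.dotProduct_mulVec_pos hne
    simp [dotProduct, Matrix.mulVec, Fin.sum_univ_two] at this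
    rw [hS10] at this
    nlinarith [this]
  have hTq : ∀ u v : ℝ,
      0 ≤ T 0 0 * u^2 + 2 * T 0 1 * u * v + T 1 1 * v^2 := by
    intro u v
    have := hT.dotProduct_mulVec_nonneg ![u, v]
    simp [dotProduct, Matrix.mulVec, Fin.sum_univ_two] at this
    rw [hT10] at this
    nlinarith [this]
  have hDpos : ∀ β : ℝ, 0 < S 0 0 - 2 * S 0 1 * β + S 1 1 * β^2 := by
    intro β
    have := hSq 1 (-β) (Or.inl one_ne_zero)
    nlinarith [this]
  -- spectrum characterization
  have hspec : ∀ μ : ℝ, μ ∈ spectrum ℝ (S⁻¹ * T) ↔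
      (T 0 0 - μ * S 0 0) * (T 1 1 - μ * S 1 1) - (T 0 1 - μ * S 0 1)^2 = 0 := by
    intro μ
    rw [spec_iff_det']
    have key : (μ • S - T).det = S.det * (μ • (1:Matrix (Fin 2) (Fin 2) ℝ) - S⁻¹ * T).det := by
      rw [← Matrix.det_mul, Matrix.mul_sub, Matrix.mul_smul, mul_one,
        ← Matrix.mul_assoc, Matrix.mul_nonsing_inv S hdu, Matrix.one_mul]
    constructor
    · intro h
      have h2 : (μ • S - T).det = 0 := by rw [key, h, mul_zero]
      rw [Matrix.det_fin_two] at h2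
      simp [Matrix.sub_apply, Matrix.smul_apply, hS10, hT10] at h2
      nlinarith [h2]
    · intro h
      have h2 : (μ • S - T).det = 0 := by
        rw [Matrix.det_fin_two]
        simp [Matrix.sub_apply, Matrix.smul_apply, hS10, hT10]
        nlinarith [h]
      rw [key] at h2
      rcases mul_eq_zero.mp h2 with h3 | h3
      · exact absurd h3 hd
      · exact h3
  have hmin' := (hspec mmin).mp hmin
  have hmax' := (hspec mmax).mp hmax
  have hmm : mmin ≤ mmax := (hbounds mmin hmin).2
  -- trace formula
  have hSinv : S⁻¹ = S.det⁻¹ • !![S 1 1, -(S 0 1); -(S 0 1), S 0 0] := by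
    rw [Matrix.inv_def, Matrix.adjugate_fin_two, Ring.inverse_eq_inv', hS10]
  have htr : (S⁻¹ * T).trace =
      (S 1 1 * T 0 0 - 2 * S 0 1 * T 0 1 + S 0 0 * T 1 1) / S.det := by
    rw [hSinv, Matrix.trace_fin_two]
    simp [Matrix.mul_apply, Fin.sum_univ_two, hT10]
    ring
  -- trace = mmin + mmax
  have hroot : ∀ m : ℝ, (T 0 0 - m * S 0 0) * (T 1 1 - m * S 1 1) - (T 0 1 - m * S 0 1)^2 = 0 →
      ((S 1 1 * T 0 0 - 2 * S 0 1 * T 0 1 + S 0 0 * T 1 1) / (S 0 0 * S 1 1 - S 0 1 ^ 2) - m)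
        ∈ spectrum ℝ (S⁻¹ * T) := by
    intro m hm
    rw [hspec]
    have expand : ∀ μ : ℝ, (T 0 0 - μ * S 0 0) * (T 1 1 - μ * S 1 1) - (T 0 1 - μ * S 0 1)^2
        = (S 0 0 * S 1 1 - S 0 1 ^ 2) * μ^2
          - (S 1 1 * T 0 0 - 2 * S 0 1 * T 0 1 + S 0 0 * T 1 1) * μ
          + (T 0 0 * T 1 1 - T 0 1 ^ 2) := by
      intro μ; ring
    rw [expand] at hm ⊢
    set r := (S 1 1 * T 0 0 - 2 * S 0 1 * T 0 1 + S 0 0 * T 1 1) / (S 0 0 * S 1 1 - S 0 1 ^ 2) - m with hrdef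
    have hr : (S 0 0 * S 1 1 - S 0 1 ^ 2) * r
        = (S 1 1 * T 0 0 - 2 * S 0 1 * T 0 1 + S 0 0 * T 1 1) - (S 0 0 * S 1 1 - S 0 1 ^ 2) * m := by
      rw [hrdef]; field_simp
    have hz : (S 0 0 * S 1 1 - S 0 1 ^ 2) *
        ((S 0 0 * S 1 1 - S 0 1 ^ 2) * r^2
          - (S 1 1 * T 0 0 - 2 * S 0 1 * T 0 1 + S 0 0 * T 1 1) * r
          + (T 0 0 * T 1 1 - T 0 1 ^ 2)) = 0 := by
      linear_combination ((S 0 0 * S 1 1 - S 0 1 ^ 2) * r - (S 0 0 * S 1 1 - S 0 1 ^ 2) * m) * hr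
        + (S 0 0 * S 1 1 - S 0 1 ^ 2) * hm
    exact (mul_eq_zero.mp hz).resolve_left hdne
  have hb1 := hbounds _ (hroot mmin hmin')
  have hb2 := hbounds _ (hroot mmax hmax')
  have hEd : (S 1 1 * T 0 0 - 2 * S 0 1 * T 0 1 + S 0 0 * T 1 1) / (S 0 0 * S 1 1 - S 0 1 ^ 2)
      = mmin + mmax := by
    obtain ⟨h1, h2⟩ := hb1
    obtain ⟨h3, h4⟩ := hb2
    linarith
  have htrace : (S⁻¹ * T).trace = mmin + mmax := by
    rw [htr, hdS, hEd]
  -- mmin ≥ 0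
  have hmin0 : 0 ≤ mmin := by
    by_contra hc
    push_neg at hc
    have hA : 0 < T 0 0 - mmin * S 0 0 := by
      nlinarith [hTq 1 0, hSq 1 0 (Or.inl one_ne_zero)]
    have key := hSq (-(T 0 1 - mmin * S 0 1)) (T 0 0 - mmin * S 0 0) (Or.inr (ne_of_gt hA))
    have key2 := hTq (-(T 0 1 - mmin * S 0 1)) (T 0 0 - mmin * S 0 0)
    nlinarith [hmin', key, key2, hc, hA, mul_pos (neg_pos.mpr hc) key]
  -- T 1 1 - mmin * S 1 1 > 0
  have hM2 : 0 < T 1 1 - mmin * S 1 1 := by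
    by_contra hc
    push_neg at hc
    have hM2neg : T 1 1 - mmin * S 1 1 < 0 := lt_of_le_of_ne hc hdenom
    have hMnsd : ∀ u v : ℝ, (T 0 0 - mmin * S 0 0) * u^2
        + 2 * (T 0 1 - mmin * S 0 1) * u * v + (T 1 1 - mmin * S 1 1) * v^2 ≤ 0 := by
      intro u v
      nlinarith [hmin', sq_nonneg ((T 0 1 - mmin * S 0 1) * u + (T 1 1 - mmin * S 1 1) * v),
        hM2neg, sq_nonneg u, sq_nonneg v]
    rcases eq_or_lt_of_le hmm with heq | hlt
    · -- mmax = mmin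
      have hE2 : S 1 1 * T 0 0 - 2 * S 0 1 * T 0 1 + S 0 0 * T 1 1
          = 2 * mmin * (S 0 0 * S 1 1 - S 0 1 ^ 2) := by
        have := hEd
        rw [← heq] at this
        rw [div_eq_iff hdne] at this
        linear_combination this
      have hp2 : 0 < mmin * S 1 1 - T 1 1 := by linarith
      have hs2 : 0 < S 1 1 := by nlinarith [hSq 0 1 (Or.inr one_ne_zero)]
      have hlin : S 1 1 * (mmin * S 0 0 - T 0 0) - 2 * S 0 1 * (mmin * S 0 1 - T 0 1)
          + S 0 0 * (mmin * S 1 1 - T 1 1) = 0 := by linear_combination -hE2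
      have hdet0 : (mmin * S 0 0 - T 0 0) * (mmin * S 1 1 - T 1 1)
          - (mmin * S 0 1 - T 0 1)^2 = 0 := by linear_combination hmin'
      nlinarith [sq_nonneg (S 1 1 * (mmin * S 0 1 - T 0 1) - S 0 1 * (mmin * S 1 1 - T 1 1)),
        mul_pos hdpos (mul_pos hp2 hp2), hlin, hdet0, mul_pos hs2 hp2, mul_pos hs2 hs2]
    · -- mmin < mmax
      have hN00 : T 0 0 - mmax * S 0 0 < 0 := by
        nlinarith [hMnsd 1 0, hSq 1 0 (Or.inl one_ne_zero), hlt]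
      have h1 := hMnsd (T 0 1 - mmax * S 0 1) (-(T 0 0 - mmax * S 0 0))
      have h2 := hSq (T 0 1 - mmax * S 0 1) (-(T 0 0 - mmax * S 0 0))
        (Or.inr (by simpa using ne_of_gt (neg_pos.mpr hN00)))
      nlinarith [hmax', h1, h2, mul_pos (sub_pos.mpr hlt) h2, hN00]
  -- QS formula
  have hQS : ∀ β, QS S T β =
      (T 0 0 - 2 * T 0 1 * β + T 1 1 * β^2) / (S 0 0 - 2 * S 0 1 * β + S 1 1 * β^2) := by
    intro β
    rw [QS]
    congr 1 <;>
    · simp [bVec, dotProduct, Matrix.mulVec, Fin.sum_univ_two, hS10, hT10]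
      ring
  -- QS lower bound
  have hQSge : ∀ β : ℝ, mmin ≤ QS S T β := by
    intro β
    rw [hQS, le_div_iff₀ (hDpos β)]
    nlinarith [sq_nonneg ((T 1 1 - mmin * S 1 1) * β - (T 0 1 - mmin * S 0 1)), hmin', hM2]
  -- QS attains mmin at β̂
  have hQSeq : QS S T ((T 0 1 - mmin * S 0 1) / (T 1 1 - mmin * S 1 1)) = mmin := by
    rw [hQS, div_eq_iff (ne_of_gt (hDpos _))]
    field_simp
    nlinarith [hmin', hM2]
  -- uniqueness for QS
  have hQSuniq : ∀ β : ℝ, QS S T β = mmin →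
      β = (T 0 1 - mmin * S 0 1) / (T 1 1 - mmin * S 1 1) := by
    intro β hβ
    rw [hQS, div_eq_iff (ne_of_gt (hDpos β))] at hβ
    have hsq : ((T 1 1 - mmin * S 1 1) * β - (T 0 1 - mmin * S 0 1))^2 = 0 := by
      nlinarith [hβ, hmin']
    have h0 : (T 1 1 - mmin * S 1 1) * β - (T 0 1 - mmin * S 0 1) = 0 := by
      exact pow_eq_zero_iff two_ne_zero |>.mp hsq
    field_simp
    linarith
  -- QT formula
  have hQT : ∀ β, QT S T β =
      ((S 1 1 * β - S 0 1)^2 * T 0 0 + 2 * (S 1 1 * β - S 0 1) * (S 0 0 - S 0 1 * β) * T 0 1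
        + (S 0 0 - S 0 1 * β)^2 * T 1 1) /
      (S.det * (S 0 0 - 2 * S 0 1 * β + S 1 1 * β^2)) := by
    intro β
    have hnum : aVec β ⬝ᵥ (S⁻¹ * T * S⁻¹).mulVec (aVec β) =
        S.det⁻¹^2 * ((S 1 1 * β - S 0 1)^2 * T 0 0
          + 2 * (S 1 1 * β - S 0 1) * (S 0 0 - S 0 1 * β) * T 0 1
          + (S 0 0 - S 0 1 * β)^2 * T 1 1) := by
      rw [hSinv]
      simp only [aVec, dotProduct, Matrix.mulVec, Matrix.mul_apply, Matrix.vecMul,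
        Fin.sum_univ_two, Matrix.smul_apply, Matrix.cons_val_zero, Matrix.cons_val_one,
        Matrix.head_cons, Matrix.cons_val', Matrix.head_fin_const, Matrix.empty_val',
        Matrix.cons_val_fin_one, Matrix.of_apply, smul_eq_mul, hT10]
      ring
    have hden : aVec β ⬝ᵥ S⁻¹.mulVec (aVec β) =
        S.det⁻¹ * (S 0 0 - 2 * S 0 1 * β + S 1 1 * β^2) := by
      rw [hSinv]
      simp only [aVec, dotProduct, Matrix.mulVec, Matrix.vecMul,
        Fin.sum_univ_two, Matrix.smul_apply, Matrix.cons_val_zero, Matrix.cons_val_one,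
        Matrix.head_cons, Matrix.cons_val', Matrix.head_fin_const, Matrix.empty_val',
        Matrix.cons_val_fin_one, Matrix.of_apply, smul_eq_mul]
      ring
    rw [QT, hnum, hden]
    have hD : S 0 0 - 2 * S 0 1 * β + S 1 1 * β^2 ≠ 0 := ne_of_gt (hDpos β)
    field_simp
  -- key identity QT = trace - QS
  have hQTeq : ∀ β, QT S T β = (S⁻¹ * T).trace - QS S T β := by
    intro β
    rw [hQT β, hQS β, htr, hdS]
    have hD : S 0 0 - 2 * S 0 1 * β + S 1 1 * β^2 ≠ 0 := ne_of_gt (hDpos β)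
    rw [div_sub_div _ _ hdne hD]
    ring
  refine ⟨hQSge, hQSeq, hQSuniq, ?_, ?_, ?_, ?_⟩
  · intro β
    rw [hQTeq]
    linarith [hQSge β]
  · rw [hQTeq, hQSeq]
  · intro β hβ
    rw [hQTeq] at hβ
    exact hQSuniq β (by linarith)
  · rw [htrace]; ring
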